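/- If a sequence of CDFs G_n on ℝ converges pointwise to a continuous CDF G, then the convergence is uniform: sup_x |G_n(x) − G(x)| → 0. -/

import Mathlib

open Filter

private lemma polya_bracket {g l llo lhi d e : ℝ}
    (h1 : llo ≤ l) (h2 : l ≤ lhi) (h3 : lhi - llo ≤ d)
    (h4 : llo - e ≤ g) (h5 : g ≤ lhi + e) : |g - l| ≤ d + e := by
  rw [abs_le]; constructor <;> linarith

/-- Polya's theorem: pointwise convergence of CDFs to a continuous CDF is uniform. -/
theorem polya_uniform_convergence
    (G : ℕ → ℝ → ℝ) (L : ℝ → ℝ)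
    (hGmono : ∀ n, Monotone (G n))
    (hGRC : ∀ n x, ContinuousWithinAt (G n) (Set.Ici x) x)
    (hGBot : ∀ n, Tendsto (G n) atBot (nhds 0))
    (hGTop : ∀ n, Tendsto (G n) atTop (nhds 1))
    (hLmono : Monotone L) (hLcont : Continuous L)
    (hLBot : Tendsto L atBot (nhds 0)) (hLTop : Tendsto L atTop (nhds 1))
    (hpt : ∀ x : ℝ, Tendsto (fun n => G n x) atTop (nhds (L x))) :
    Tendsto (fun n => ⨆ x : ℝ, |G n x - L x|) atTop (nhds 0) := by
  -- All functions take values in [0,1]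
  have hG0 : ∀ n x, 0 ≤ G n x := fun n x =>
    le_of_tendsto (hGBot n) ((eventually_le_atBot x).mono fun y hy => hGmono n hy)
  have hG1 : ∀ n x, G n x ≤ 1 := fun n x =>
    ge_of_tendsto (hGTop n) ((eventually_ge_atTop x).mono fun y hy => hGmono n hy)
  have hL0 : ∀ x, 0 ≤ L x := fun x =>
    le_of_tendsto hLBot ((eventually_le_atBot x).mono fun y hy => hLmono hy)
  have hL1 : ∀ x, L x ≤ 1 := fun x =>
    ge_of_tendsto hLTop ((eventually_ge_atTop x).mono fun y hy => hLmono hy)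
  -- L attains every value in (0,1)
  have hsurj : ∀ c : ℝ, 0 < c → c < 1 → ∃ x, L x = c := by
    intro c hc0 hc1
    obtain ⟨a, ha⟩ := (hLBot.eventually_lt_const hc0).exists
    obtain ⟨b, hb⟩ := (hLTop.eventually_const_lt hc1).exists
    have hab : a ≤ b := by
      by_contra h
      exact absurd (hLmono (le_of_not_ge h)) (by linarith)
    obtain ⟨x, _, hx⟩ := intermediate_value_Icc hab hLcont.continuousOn
      (Set.mem_Icc.2 ⟨ha.le, hb.le⟩)
    exact ⟨x, hx⟩
  -- Key uniform eventual bound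
  have key : ∀ ε : ℝ, 0 < ε → ∀ᶠ n in atTop, ∀ x, |G n x - L x| ≤ ε := by
    intro ε hε
    obtain ⟨k, hk⟩ := exists_nat_one_div_lt (show (0:ℝ) < ε/2 by linarith)
    set K : ℕ := k + 1 with hKdef
    have hK : 0 < K := Nat.succ_pos k
    have hKgap : (1 : ℝ) / (K + 1) < ε / 2 := by
      calc (1 : ℝ) / (K + 1) ≤ 1 / (k + 1) := by
            apply one_div_le_one_div_of_le
            · positivity
            · push_cast [hKdef]; linarith
        _ < ε / 2 := hk
    -- the grid values
    set c : Fin K → ℝ := fun i => ((i : ℝ) + 1) / (K + 1) with hcdef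
    have hc0 : ∀ i, 0 < c i := fun i => by positivity
    have hc1 : ∀ i, c i < 1 := by
      intro i
      show ((i : ℝ) + 1) / (K + 1) < 1
      rw [div_lt_one (by positivity)]
      have : (i : ℝ) < K := by exact_mod_cast i.2
      linarith
    have hcmono : ∀ i j : Fin K, (i : ℕ) < (j : ℕ) → c i < c j := by
      intro i j hij
      have hij' : (i : ℝ) < j := by exact_mod_cast hij
      show ((i : ℝ) + 1) / (K + 1) < ((j : ℝ) + 1) / (K + 1)
      have hden : (0:ℝ) < (K:ℝ) + 1 := by positivity
      rw [div_lt_div_iff₀ hden hden]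
      nlinarith
    -- the grid points
    have hexists : ∀ i : Fin K, ∃ x, L x = c i := fun i => hsurj (c i) (hc0 i) (hc1 i)
    set xs : Fin K → ℝ := fun i => (hexists i).choose with hxsdef
    have hxs : ∀ i, L (xs i) = c i := fun i => (hexists i).choose_spec
    -- eventually G n is close to L at all grid points
    have hev : ∀ᶠ n in atTop, ∀ i : Fin K, |G n (xs i) - L (xs i)| < ε / 2 := by
      rw [eventually_all]
      intro i
      have := (hpt (xs i)).eventually
        (Metric.ball_mem_nhds (L (xs i)) (by linarith : (0:ℝ) < ε/2))
      filter_upwards [this] with n hn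
      rw [Real.dist_eq] at hn
      exact hn
    filter_upwards [hev] with n hn x
    set i0 : Fin K := ⟨0, hK⟩ with hi0def
    by_cases h0 : x < xs i0
    -- left tail
    · obtain ⟨hl, hr⟩ := abs_lt.1 (hn i0)
      rw [hxs] at hl hr
      have hLx : L x ≤ c i0 := (hxs i0) ▸ hLmono h0.le
      have hGx : G n x ≤ G n (xs i0) := hGmono n h0.le
      have hc0' : c i0 ≤ ε / 2 := by
        have hceq : c i0 = 1 / (K + 1) := by
          show (((0:ℕ) : ℝ) + 1) / (K + 1) = 1 / (K + 1)
          norm_num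
        rw [hceq]; exact hKgap.le
      have hb := polya_bracket (g := G n x) (l := L x) (llo := 0) (lhi := c i0)
        (d := ε/2) (e := ε/2) (hL0 x) hLx (by linarith) (by linarith [hG0 n x]) (by linarith)
      linarith
    -- pick the largest grid point ≤ x
    · push_neg at h0
      set S : Finset (Fin K) := Finset.univ.filter (fun i => xs i ≤ x) with hSdef
      have hS : S.Nonempty := ⟨i0, by simp [hSdef, h0]⟩
      set i : Fin K := S.max' hS with hidef
      have hiS : xs i ≤ x := (Finset.mem_filter.1 (S.max'_mem hS)).2
      have hmax : ∀ j : Fin K, xs j ≤ x → j ≤ i := by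
        intro j hj
        exact S.le_max' j (by simp [hSdef, hj])
      obtain ⟨hil, hir⟩ := abs_lt.1 (hn i)
      rw [hxs] at hil hir
      have hLlo : c i ≤ L x := (hxs i) ▸ hLmono hiS
      have hGlo : G n (xs i) ≤ G n x := hGmono n hiS
      by_cases h2 : (i : ℕ) + 1 < K
      -- middle case
      · set j : Fin K := ⟨(i : ℕ) + 1, h2⟩ with hjdef
        have hxj : x < xs j := by
          by_contra h
          have hji : j ≤ i := hmax j (le_of_not_gt h)
          have h' : (i : ℕ) + 1 ≤ (i : ℕ) := hji
          omega
        obtain ⟨hjl, hjr⟩ := abs_lt.1 (hn j)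
        rw [hxs] at hjl hjr
        have hLhi : L x ≤ c j := (hxs j) ▸ hLmono hxj.le
        have hGhi : G n x ≤ G n (xs j) := hGmono n hxj.le
        have hgap : c j - c i ≤ ε / 2 := by
          have hceq : c j - c i = 1 / (K + 1) := by
            show (((j : ℕ) : ℝ) + 1) / (K + 1) - (((i : ℕ) : ℝ) + 1) / (K + 1) = 1 / (K + 1)
            have hjv : ((j : ℕ) : ℝ) = ((i : ℕ) : ℝ) + 1 := by
              simp [hjdef]
            rw [hjv]
            field_simp
            ring
          rw [hceq]; exact hKgap.le
        have hb := polya_bracket (g := G n x) (l := L x) (llo := c i) (lhi := c j)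
          (d := ε/2) (e := ε/2) hLlo hLhi hgap (by linarith) (by linarith)
        linarith
      -- right tail
      · have hiK : (i : ℕ) + 1 = K := by omega
        have hgap : 1 - c i ≤ ε / 2 := by
          have hceq : c i = (K : ℝ) / (K + 1) := by
            show (((i : ℕ) : ℝ) + 1) / (K + 1) = (K : ℝ) / (K + 1)
            rw [show ((i : ℕ) : ℝ) + 1 = (K : ℝ) by exact_mod_cast hiK]
          rw [hceq]
          have : 1 - (K : ℝ) / (K + 1) = 1 / (K + 1) := by
            field_simp
            ring
          rw [this]; exact hKgap.le
        have hb := polya_bracket (g := G n x) (l := L x) (llo := c i) (lhi := 1)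
          (d := ε/2) (e := ε/2) hLlo (hL1 x) hgap (by linarith) (by linarith [hG1 n x])
        linarith
  -- conclude
  rw [Metric.tendsto_atTop]
  intro ε hε
  obtain ⟨N, hN⟩ := eventually_atTop.1 (key (ε/2) (by linarith))
  refine ⟨N, fun n hn => ?_⟩
  have hbdd : BddAbove (Set.range fun x => |G n x - L x|) := by
    refine ⟨2, ?_⟩
    rintro y ⟨x, rfl⟩
    calc |G n x - L x| ≤ |G n x| + |L x| := abs_sub _ _
      _ ≤ 1 + 1 := by
          gcongr
          · rw [abs_le]; exact ⟨by linarith [hG0 n x], hG1 n x⟩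
          · rw [abs_le]; exact ⟨by linarith [hL0 x], hL1 x⟩
      _ = 2 := by norm_num
  have hsup_le : (⨆ x : ℝ, |G n x - L x|) ≤ ε / 2 := ciSup_le fun x => hN n hn x
  have hsup_ge : 0 ≤ ⨆ x : ℝ, |G n x - L x| :=
    le_trans (abs_nonneg _) (le_ciSup hbdd 0)
  rw [Real.dist_eq, sub_zero, abs_of_nonneg hsup_ge]
  linarith
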